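/- Let P be a probability distribution on a finite vocabulary with P_max = max_w P_w ≤ 1−Δ for small Δ, and let F_{1,P}(r) = Σ_w P_w r^{1/P_w}. Then for the log score h_log(y) = log y, E_{Y∼μ_{1,P}} log Y − E_{Y∼Uniform(0,1)} log Y = 1 − Σ_w P_w², and there exist constants c₁, c₂ > 0 with c₁Δ ≤ 1 − Σ_w P_w² ≤ c₂Δ. -/

import Mathlib

open MeasureTheory Real Set Finset

lemma exp_neg_image_Ioi : (fun t : ℝ => Real.exp (-t)) '' (Set.Ioi 0) = Set.Ioo (0:ℝ) 1 := by
  ext x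
  constructor
  · rintro ⟨t, ht, rfl⟩
    exact ⟨Real.exp_pos _, by rwa [Real.exp_lt_one_iff, neg_neg_iff_pos]⟩
  · rintro ⟨hx0, hx1⟩
    exact ⟨-Real.log x, by simpa using Real.log_neg hx0 hx1,
      by simp [Real.exp_log hx0]⟩

lemma exp_neg_hasDeriv : ∀ t ∈ Set.Ioi (0:ℝ),
    HasDerivWithinAt (fun t : ℝ => Real.exp (-t)) (-Real.exp (-t)) (Set.Ioi 0) t := by
  intro t _
  have : HasDerivAt (fun t : ℝ => Real.exp (-t)) (Real.exp (-t) * (-1)) t :=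
    (Real.hasDerivAt_exp (-t)).comp t ((hasDerivAt_id t).neg)
  simpa using this.hasDerivWithinAt

lemma exp_neg_inj : Set.InjOn (fun t : ℝ => Real.exp (-t)) (Set.Ioi 0) := by
  intro a _ b _ h
  have := Real.exp_injective h
  linarith [neg_injective this]

lemma pointwise_eq (a : ℝ) : ∀ t ∈ Set.Ioi (0:ℝ),
    |(-Real.exp (-t))| • (Real.exp (-t) ^ (a - 1) * Real.log (Real.exp (-t)))
      = -(t ^ ((1:ℝ)) * Real.exp (-a * t ^ ((1:ℝ)))) := by
  intro t ht
  rw [abs_neg, Real.abs_exp, smul_eq_mul, Real.log_exp, ← Real.exp_mul,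
    Real.rpow_one]
  have h2 : Real.exp (-t) * Real.exp (-t * (a - 1)) = Real.exp (-a * t) := by
    rw [← Real.exp_add]; ring_nf
  rw [show Real.exp (-t) * (Real.exp (-t * (a - 1)) * -t)
      = Real.exp (-t) * Real.exp (-t * (a - 1)) * -t by ring, h2]
  ring

lemma int_rpow_log (a : ℝ) (ha : 0 < a) :
    ∫ r in Set.Ioo (0:ℝ) 1, r ^ (a - 1) * Real.log r = -(1 / a) ^ 2 := by
  rw [← exp_neg_image_Ioi,
    MeasureTheory.integral_image_eq_integral_abs_deriv_smul measurableSet_Ioi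
      exp_neg_hasDeriv exp_neg_inj (fun r => r ^ (a - 1) * Real.log r),
    MeasureTheory.setIntegral_congr_fun measurableSet_Ioi (pointwise_eq a),
    MeasureTheory.integral_neg]
  have h2 : ∫ t in Set.Ioi (0:ℝ), t ^ ((2:ℝ) - 1) * Real.exp (-(a * t))
      = (1 / a) ^ (2:ℝ) * Real.Gamma 2 :=
    integral_rpow_mul_exp_neg_mul_Ioi (by norm_num) ha
  have h3 : ∫ t in Set.Ioi (0:ℝ), t ^ ((1:ℝ)) * Real.exp (-a * t ^ ((1:ℝ)))
      = ∫ t in Set.Ioi (0:ℝ), t ^ ((2:ℝ) - 1) * Real.exp (-(a * t)) := by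
    refine MeasureTheory.setIntegral_congr_fun measurableSet_Ioi (fun t ht => ?_)
    norm_num
  rw [h3, h2, Real.Gamma_two, mul_one]
  rw [show (2:ℝ) = ((2:ℕ):ℝ) by norm_num, Real.rpow_natCast]

lemma integrable_rpow_log (a : ℝ) (ha : 0 < a) :
    MeasureTheory.IntegrableOn (fun r : ℝ => r ^ (a - 1) * Real.log r)
      (Set.Ioo (0:ℝ) 1) := by
  rw [← exp_neg_image_Ioi,
    MeasureTheory.integrableOn_image_iff_integrableOn_abs_deriv_smul measurableSet_Ioi
      exp_neg_hasDeriv exp_neg_inj]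
  have h := (integrableOn_rpow_mul_exp_neg_mul_rpow (p := 1) (s := 1) (b := a)
    (by norm_num) one_pos ha).neg
  exact MeasureTheory.IntegrableOn.congr_fun h
    (fun t ht => (pointwise_eq a t ht).symm) measurableSet_Ioi

/-- Expectation gap of the log score `h_log(y) = log y` for the Gumbel-max watermark:
`E_{1,P} log Y − E_0 log Y = 1 − ∑_w P_w²`, and this gap is of order
`Δ = 1 − max_w P_w` (for `Δ` small, with explicit constants). -/
theorem log_score_expectation_gap {W : Type*} [Fintype W] [Nonempty W]
    (P : W → ℝ) (hpos : ∀ w, 0 < P w) (hsum : ∑ w, P w = 1) :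
    ((∫ r in Set.Ioo (0:ℝ) 1, (∑ w, r ^ (1 / P w - 1)) * Real.log r) -
        ∫ r in Set.Ioo (0:ℝ) 1, Real.log r)
      = 1 - ∑ w, (P w) ^ 2 ∧
    ∃ c₁ c₂ : ℝ, 0 < c₁ ∧ 0 < c₂ ∧
      c₁ * (1 - Finset.univ.sup' Finset.univ_nonempty P) ≤ 1 - ∑ w, (P w) ^ 2 ∧
      1 - ∑ w, (P w) ^ 2 ≤ c₂ * (1 - Finset.univ.sup' Finset.univ_nonempty P) := by
  constructor
  · have h1 : (∫ r in Set.Ioo (0:ℝ) 1, (∑ w, r ^ (1 / P w - 1)) * Real.log r)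
        = ∑ w, ∫ r in Set.Ioo (0:ℝ) 1, r ^ (1 / P w - 1) * Real.log r := by
      rw [← MeasureTheory.integral_finset_sum _
        (fun w _ => integrable_rpow_log (1 / P w) (by have := hpos w; positivity))]
      exact MeasureTheory.setIntegral_congr_fun measurableSet_Ioo
        (fun r _ => by rw [Finset.sum_mul])
    have h2 : ∀ w : W, (∫ r in Set.Ioo (0:ℝ) 1, r ^ (1 / P w - 1) * Real.log r)
        = -(P w) ^ 2 := by
      intro w
      rw [int_rpow_log (1 / P w) (by have := hpos w; positivity), one_div_one_div]
    have h3 : (∫ r in Set.Ioo (0:ℝ) 1, Real.log r) = -1 := by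
      have := int_rpow_log 1 one_pos
      simp only [sub_self, Real.rpow_zero, one_mul] at this
      rw [this]; norm_num
    rw [h1, h3, Finset.sum_congr rfl (fun w _ => h2 w), Finset.sum_neg_distrib]
    ring
  · obtain ⟨w₀, -, hw₀⟩ := Finset.exists_mem_eq_sup' Finset.univ_nonempty P
    have hle : ∀ w, P w ≤ P w₀ := fun w => hw₀ ▸ Finset.le_sup' P (Finset.mem_univ w)
    have hM1 : P w₀ ≤ 1 := by
      rw [← hsum]
      exact Finset.single_le_sum (fun w _ => (hpos w).le) (Finset.mem_univ w₀)
    have hS1 : ∑ w, (P w) ^ 2 ≤ P w₀ := by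
      calc ∑ w, (P w) ^ 2 ≤ ∑ w, P w * P w₀ := by
            refine Finset.sum_le_sum (fun w _ => ?_)
            rw [sq]
            exact mul_le_mul_of_nonneg_left (hle w) (hpos w).le
        _ = P w₀ := by rw [← Finset.sum_mul, hsum, one_mul]
    have hS2 : (P w₀) ^ 2 ≤ ∑ w, (P w) ^ 2 :=
      Finset.single_le_sum (fun w _ => sq_nonneg (P w)) (Finset.mem_univ w₀)
    rw [hw₀]
    exact ⟨1, 2, one_pos, two_pos, by nlinarith, by nlinarith⟩
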